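/- Let f : [0,1]² → [0,1] be a measurable function. For any intervals A, A', B, B' ⊆ [0,1] with λ(A), λ(B), λ(A'), λ(B') all positive, one has |d_f(A,B) − d_f(A',B')| ≤ 2·λ((A×B) Δ (A'×B'))/(λ(A)·λ(B)). -/

import Mathlib

open MeasureTheory

/-- Normalized integral density `d_f(A,B) = (∫_{A×B} f) / (λ(A) λ(B))`. -/
noncomputable def dBox (f : ℝ × ℝ → ℝ) (A B : Set ℝ) : ℝ :=
  (∫ p in A ×ˢ B, f p) / ((volume A).toReal * (volume B).toReal)

set_option maxHeartbeats 1000000 in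
theorem density_diff_of_box_symmDiff (f : ℝ × ℝ → ℝ) (hmeas : Measurable f)
    (hf : ∀ p, f p ∈ Set.Icc (0 : ℝ) 1)
    (A A' B B' : Set ℝ)
    (hA : A.OrdConnected) (hA' : A'.OrdConnected)
    (hB : B.OrdConnected) (hB' : B'.OrdConnected)
    (hAsub : A ⊆ Set.Icc 0 1) (hA'sub : A' ⊆ Set.Icc 0 1)
    (hBsub : B ⊆ Set.Icc 0 1) (hB'sub : B' ⊆ Set.Icc 0 1)
    (hApos : 0 < (volume A).toReal) (hA'pos : 0 < (volume A').toReal)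
    (hBpos : 0 < (volume B).toReal) (hB'pos : 0 < (volume B').toReal) :
    |dBox f A B - dBox f A' B'| ≤
      2 * (volume (symmDiff (A ×ˢ B) (A' ×ˢ B'))).toReal /
        ((volume A).toReal * (volume B).toReal) := by
  have hAm : MeasurableSet A := hA.measurableSet
  have hA'm : MeasurableSet A' := hA'.measurableSet
  have hBm : MeasurableSet B := hB.measurableSet
  have hB'm : MeasurableSet B' := hB'.measurableSet
  set S := A ×ˢ B with hS
  set T := A' ×ˢ B' with hT
  have hSm : MeasurableSet S := hAm.prod hBm
  have hTm : MeasurableSet T := hA'm.prod hB'm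
  -- finiteness
  have hIcc : volume (Set.Icc (0:ℝ) 0 ×ˢ Set.Icc (0:ℝ) 0) ≠ ⊤ := by
    simp
  have hfin : ∀ U : Set (ℝ × ℝ), U ⊆ Set.Icc (0:ℝ) 1 ×ˢ Set.Icc (0:ℝ) 1 → volume U ≠ ⊤ := by
    intro U hU
    refine ne_top_of_le_ne_top ?_ (measure_mono hU)
    rw [show (volume : Measure (ℝ × ℝ)) = (volume).prod volume from rfl,
      Measure.prod_prod]
    simp
  have hSsub : S ⊆ Set.Icc (0:ℝ) 1 ×ˢ Set.Icc (0:ℝ) 1 := Set.prod_mono hAsub hBsub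
  have hTsub : T ⊆ Set.Icc (0:ℝ) 1 ×ˢ Set.Icc (0:ℝ) 1 := Set.prod_mono hA'sub hB'sub
  have hSfin : volume S ≠ ⊤ := hfin S hSsub
  have hTfin : volume T ≠ ⊤ := hfin T hTsub
  -- integrability on any finite-measure set
  have hint : ∀ U : Set (ℝ × ℝ), volume U ≠ ⊤ → IntegrableOn f U volume := by
    intro U hU
    exact Measure.integrableOn_of_bounded hU hmeas.aestronglyMeasurable
      (ae_of_all _ fun x => by
        rcases hf x with ⟨h0, h1⟩
        rw [Real.norm_eq_abs, abs_of_nonneg h0]; exact h1)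
  -- bounds on integrals over measurable finite sets
  have hIbound : ∀ U : Set (ℝ × ℝ), volume U ≠ ⊤ →
      0 ≤ ∫ p in U, f p ∧ (∫ p in U, f p) ≤ (volume U).toReal := by
    intro U hU
    have hnorm : ‖∫ p in U, f p‖ ≤ 1 * (volume U).toReal :=
      norm_setIntegral_le_of_norm_le_const hU.lt_top
        (fun x _ => by rw [Real.norm_eq_abs, abs_of_nonneg (hf x).1]; exact (hf x).2)
    rw [Real.norm_eq_abs, one_mul] at hnorm
    constructor
    · exact setIntegral_nonneg_of_ae_restrict (ae_of_all _ fun x => (hf x).1)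
    · exact (le_abs_self _).trans hnorm
  -- real quantities
  set a := (volume (S \ T)).toReal with ha
  set b := (volume (T \ S)).toReal with hb
  have hafin : volume (S \ T) ≠ ⊤ := hfin _ (Set.diff_subset.trans hSsub)
  have hbfin : volume (T \ S) ≠ ⊤ := hfin _ (Set.diff_subset.trans hTsub)
  have hifin : volume (S ∩ T) ≠ ⊤ := hfin _ (Set.inter_subset_left.trans hSsub)
  -- symmDiff measure
  have hD : (volume (symmDiff S T)).toReal = a + b := by
    rw [Set.symmDiff_def]
    rw [measure_union (disjoint_sdiff_sdiff) (hTm.diff hSm)]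
    rw [ENNReal.toReal_add hafin hbfin]
  -- integral decomposition
  have hIS : ∫ p in S, f p = (∫ p in S ∩ T, f p) + ∫ p in S \ T, f p :=
    (integral_inter_add_diff hTm (hint S hSfin)).symm
  have hIT : ∫ p in T, f p = (∫ p in T ∩ S, f p) + ∫ p in T \ S, f p :=
    (integral_inter_add_diff hSm (hint T hTfin)).symm
  have hinter : ∫ p in T ∩ S, f p = ∫ p in S ∩ T, f p := by rw [Set.inter_comm]
  -- measures decomposition
  have hmS : (volume S).toReal = (volume (S ∩ T)).toReal + a := by
    rw [ha, ← ENNReal.toReal_add hifin hafin, measure_inter_add_diff S hTm]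
  have hmT : (volume T).toReal = (volume (S ∩ T)).toReal + b := by
    rw [hb, ← ENNReal.toReal_add hifin hbfin, Set.inter_comm, measure_inter_add_diff T hSm]
  -- product measures
  have hvolS : (volume S).toReal = (volume A).toReal * (volume B).toReal := by
    rw [hS, show (volume : Measure (ℝ × ℝ)) = (volume).prod volume from rfl,
      Measure.prod_prod, ENNReal.toReal_mul]
  have hvolT : (volume T).toReal = (volume A').toReal * (volume B').toReal := by
    rw [hT, show (volume : Measure (ℝ × ℝ)) = (volume).prod volume from rfl,
      Measure.prod_prod, ENNReal.toReal_mul]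
  -- abbreviations
  set I := ∫ p in S, f p
  set I' := ∫ p in T, f p
  set m := (volume A).toReal * (volume B).toReal with hm
  set m' := (volume A').toReal * (volume B').toReal with hm'
  have hd : dBox f A B = I / m := rfl
  have hd' : dBox f A' B' = I' / m' := rfl
  have hmpos : 0 < m := mul_pos hApos hBpos
  have hm'pos : 0 < m' := mul_pos hA'pos hB'pos
  have hIa := hIbound (S \ T) hafin
  have hIb := hIbound (T \ S) hbfin
  have hIi := hIbound (S ∩ T) hifin
  have hI'le : I' ≤ m' := by
    calc I' ≤ (volume T).toReal := (hIbound T hTfin).2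
      _ = m' := hvolT
  have hI'0 : 0 ≤ I' := (hIbound T hTfin).1
  have hdiffI : |I - I'| ≤ a + b := by
    rw [abs_le]
    constructor <;> [nlinarith [hIa.1, hIa.2, hIb.1, hIb.2]; nlinarith [hIa.1, hIa.2, hIb.1, hIb.2]]
  have ha0 : 0 ≤ a := ENNReal.toReal_nonneg
  have hb0 : 0 ≤ b := ENNReal.toReal_nonneg
  have em : m = (volume (S ∩ T)).toReal + a := by rw [← hvolS]; exact hmS
  have em' : m' = (volume (S ∩ T)).toReal + b := by rw [← hvolT]; exact hmT
  have hdiffm : |m - m'| ≤ a + b := by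
    rw [abs_le]; constructor <;> [linarith; linarith]
  -- final algebra
  clear_value a b I I' m m'
  rw [hD, hd, hd']
  have key : |I / m - I' / m'| * (m * m') ≤ 2 * (a + b) * m' := by
    have : I / m - I' / m' = ((I - I') * m' + I' * (m' - m)) / (m * m') := by
      field_simp; ring
    rw [this, abs_div, abs_of_pos (mul_pos hmpos hm'pos),
      div_mul_cancel₀ _ (mul_pos hmpos hm'pos).ne']
    calc |(I - I') * m' + I' * (m' - m)| ≤ |(I - I')| * m' + I' * |m' - m| := by
          refine (abs_add_le _ _).trans ?_
          rw [abs_mul, abs_mul, abs_of_pos hm'pos, abs_of_nonneg hI'0]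
      _ ≤ (a + b) * m' + m' * (a + b) := by
          have h1 : |I - I'| ≤ a + b := hdiffI
          have h2 : |m' - m| ≤ a + b := by rw [abs_sub_comm]; exact hdiffm
          have h3 : |m' - m| ≥ 0 := abs_nonneg _
          nlinarith
      _ = 2 * (a + b) * m' := by ring
  have key2 : |I / m - I' / m'| * m ≤ 2 * (a + b) := by
    have := key
    rw [← mul_assoc] at this
    exact (mul_le_mul_iff_left₀ hm'pos).1 this
  calc |I / m - I' / m'| = |I / m - I' / m'| * m / m := by
        rw [mul_div_cancel_right₀ _ hmpos.ne']
    _ ≤ 2 * (a + b) / m := by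
        exact div_le_div_of_nonneg_right key2 hmpos.le |>.trans_eq rfl
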